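/- arXiv:2304.02077 — 4 statements merged into one kernel-verified Lean document; each statement's English description precedes it below -/
import Mathlib

section
/- Let X ~ Bin(n, p) and let Y be distributed as X conditioned on the event {X ≥ 1}. Then Y is stochastically dominated by 1 + X', where X' ~ Bin(n, p), i.e., P(Y ≥ k) ≤ P(1 + X' ≥ k) for all k. -/
open scoped ENNReal ProbabilityTheory
open Finset

private lemma choose_add_le_mul (n m i : ℕ) (h : m + i ≤ n) :
    n.choose (m + i) ≤ n.choose m * n.choose i := by
  calc n.choose (m+i) ≤ n.choose (m+i) * (m+i).choose m :=
        Nat.le_mul_of_pos_right _ (Nat.choose_pos (Nat.le_add_right m i))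
    _ = n.choose m * (n-m).choose i := by
        rw [Nat.choose_mul (Nat.le_add_right m i), Nat.add_sub_cancel_left]
    _ ≤ n.choose m * n.choose i :=
        Nat.mul_le_mul_left _ (Nat.choose_le_choose i (Nat.sub_le n m))

/-- the law of `X ~ Bin(n, p)` conditioned on `{X ≥ 1}` is stochastically
dominated by the law of `1 + X'` with `X' ~ Bin(n, p)`: for every `k`,
`P(X ≥ k ∣ X ≥ 1) ≤ P(1 + X' ≥ k)`. -/
theorem stmt9 (n : ℕ) (p : ℝ≥0∞) (hp : p ≤ 1)
    (b : MeasureTheory.Measure ℕ)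
    (hb : b = ((PMF.binomial p.toNNReal (by simpa using ENNReal.toNNReal_mono ENNReal.one_ne_top hp) n).map (Fin.val : Fin (n+1) → ℕ)).toMeasure)
    (hpos : b {j | 1 ≤ j} ≠ 0) :
    ∀ k : ℕ, (b[|{j | 1 ≤ j}]) {j | k ≤ j} ≤ b {j | k ≤ j + 1} := by
  classical
  intro k
  set w : ℕ → ℝ≥0∞ := fun j => p ^ j * (1 - p) ^ (n - j) * (n.choose j : ℕ) with hw
  set T : ℕ → ℝ≥0∞ := fun m => ∑ j ∈ Finset.range (n + 1), if m ≤ j then w j else 0 with hT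
  have hmeasb : ∀ S : Set ℕ, MeasurableSet S := fun S => trivial
  have hmeasf : Measurable (Fin.val : Fin (n+1) → ℕ) := measurable_of_countable _
  -- b of upper sets
  have hbS : ∀ m : ℕ, b {j | m ≤ j} = T m := by
    intro m
    rw [hb, PMF.toMeasure_map_apply _ _ _ hmeasf (hmeasb _),
      PMF.toMeasure_apply _ _, tsum_fintype]
    show _ = ∑ j ∈ Finset.range (n + 1), if m ≤ j then w j else 0
    rw [← Fin.sum_univ_eq_sum_range (fun j => if m ≤ j then w j else 0)]
    refine Finset.sum_congr rfl fun i _ => ?_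
    simp only [Set.indicator_apply, Set.mem_preimage, Set.mem_setOf_eq]
    by_cases h : m ≤ (i : ℕ)
    · rw [if_pos h, if_pos h]; erw [PMF.binomial_apply]
      have hpt : p ≠ ⊤ := ne_top_of_le_ne_top ENNReal.one_ne_top hp
      push_cast [ENNReal.coe_sub, ENNReal.coe_toNNReal hpt, Fin.val_last]
      rfl
    · rw [if_neg h, if_neg h]
    exact hmeasf (hmeasb _)
  have huniv : b Set.univ = 1 := by
    rw [hb]; exact MeasureTheory.measure_univ
  have hT0 : T 0 = 1 := by
    have h0 : Set.univ = {j : ℕ | 0 ≤ j} := by ext j; simp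
    rw [← hbS 0, ← h0, huniv]
  -- splitting lemma
  have hsplit : ∀ m : ℕ, m ≤ n → T m = w m + T (m + 1) := by
    intro m hm
    show (∑ j ∈ Finset.range (n + 1), if m ≤ j then w j else 0)
      = w m + ∑ j ∈ Finset.range (n + 1), if m + 1 ≤ j then w j else 0
    have : ∀ j ∈ Finset.range (n + 1), (if m ≤ j then w j else 0)
        = (if j = m then w j else 0) + (if m + 1 ≤ j then w j else 0) := by
      intro j _
      rcases lt_trichotomy j m with h | h | h
      · rw [if_neg (by omega), if_neg (by omega), if_neg (by omega), add_zero]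
      · rw [if_pos (by omega), if_pos h, if_neg (by omega), add_zero]
      · rw [if_pos (by omega), if_neg (by omega), if_pos (by omega), zero_add]
    rw [Finset.sum_congr rfl this, Finset.sum_add_distrib, Finset.sum_ite_eq' _ m w,
      if_pos (Finset.mem_range.2 (by omega))]
  -- every w j is finite (≤ 1)
  have hwle : ∀ m : ℕ, m ≤ n → w m ≤ 1 := by
    intro m hm
    rw [← hT0]
    calc w m = if (0:ℕ) ≤ m then w m else 0 := by rw [if_pos (Nat.zero_le m)]
      _ ≤ T 0 := Finset.single_le_sum (f := fun j => if (0:ℕ) ≤ j then w j else 0)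
          (fun _ _ => zero_le) (Finset.mem_range.2 (by omega))
  have hTle : ∀ m : ℕ, T m ≤ 1 := by
    intro m
    rw [← hT0]
    refine Finset.sum_le_sum fun j _ => ?_
    simp only [Nat.zero_le, if_true]
    split_ifs with h
    · exact le_rfl
    · exact zero_le
  -- T m vanishes past n
  have hTzero : ∀ m : ℕ, n < m → T m = 0 := by
    intro m hm
    refine Finset.sum_eq_zero fun j hj => ?_
    rw [if_neg (by simp at hj; omega)]
  -- the key inequality : (1-p)^n * T m ≤ w m for 1 ≤ m
  have hq : (1 - p) ^ n = w 0 := by simp [hw]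
  have hkey : ∀ m : ℕ, 1 ≤ m → (1 - p) ^ n * T m ≤ w m := by
    intro m hm
    by_cases hmn : m ≤ n
    swap
    · rw [hTzero m (by omega), mul_zero]; exact zero_le
    have hfil : (Finset.range (n + 1)).filter (fun j => m ≤ j) = Finset.Icc m n := by
      ext j; simp [Finset.mem_filter, Finset.mem_range, Finset.mem_Icc]; omega
    have hTm : T m = ∑ j ∈ Finset.Icc m n, w j := by
      show (∑ j ∈ Finset.range (n + 1), if m ≤ j then w j else 0) = _
      rw [← Finset.sum_filter, hfil]
    rw [hTm, Finset.mul_sum]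
    have hIcc : Finset.Icc m n = Finset.Ico m (n + 1) := rfl
    rw [hIcc, Finset.sum_Ico_eq_sum_range]
    have hterm : ∀ i ∈ Finset.range (n + 1 - m),
        (1 - p) ^ n * w (m + i) ≤ w m * w i := by
      intro i hi
      simp only [Finset.mem_range] at hi
      have hmi : m + i ≤ n := by omega
      have e1 : n + (n - (m + i)) = (n - m) + (n - i) := by omega
      calc (1 - p) ^ n * w (m + i)
          = p ^ (m + i) * (1 - p) ^ ((n - m) + (n - i)) * (n.choose (m + i) : ℕ) := by
            rw [hw]; rw [← e1, pow_add]; ring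
        _ ≤ p ^ (m + i) * (1 - p) ^ ((n - m) + (n - i)) *
              ((n.choose m : ℕ) * (n.choose i : ℕ)) := by
            refine mul_le_mul_right ?_ _
            rw [← Nat.cast_mul]
            exact_mod_cast choose_add_le_mul n m i hmi
        _ = w m * w i := by rw [hw]; rw [pow_add, pow_add]; ring
    calc ∑ i ∈ Finset.range (n + 1 - m), (1 - p) ^ n * w (m + i)
        ≤ ∑ i ∈ Finset.range (n + 1 - m), w m * w i := Finset.sum_le_sum hterm
      _ ≤ ∑ i ∈ Finset.range (n + 1), w m * w i := by
          refine Finset.sum_le_sum_of_subset ?_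
          exact Finset.range_subset_range.2 (by omega)
      _ = w m * T 0 := by
          rw [Finset.mul_sum]
          refine Finset.sum_congr rfl fun i _ => ?_
          rw [if_pos (Nat.zero_le i)]
      _ = w m := by rw [hT0, mul_one]
  -- assemble
  have hs : MeasurableSet {j : ℕ | 1 ≤ j} := hmeasb _
  rw [ProbabilityTheory.cond_apply hs]
  by_cases hk : k ≤ 1
  · -- RHS is b univ = 1
    have : {j : ℕ | k ≤ j + 1} = Set.univ := by ext j; simp; omega
    rw [this, huniv]
    calc (b {j | 1 ≤ j})⁻¹ * b ({j | 1 ≤ j} ∩ {j | k ≤ j})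
        ≤ (b {j | 1 ≤ j})⁻¹ * b {j | 1 ≤ j} :=
          mul_le_mul_right (MeasureTheory.measure_mono Set.inter_subset_left) _
      _ ≤ 1 := ENNReal.inv_mul_le_one _
  · push_neg at hk
    obtain ⟨m, rfl⟩ : ∃ m, k = m + 1 := ⟨k - 1, by omega⟩
    have hm1 : 1 ≤ m := by omega
    have hint : {j : ℕ | 1 ≤ j} ∩ {j | m + 1 ≤ j} = {j | m + 1 ≤ j} := by
      ext j; simp; omega
    have hset : {j : ℕ | m + 1 ≤ j + 1} = {j | m ≤ j} := by ext j; simp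
    rw [hint, hset, hbS, hbS, hbS]
    have hb1ne : T 1 ≠ 0 := by rw [← hbS]; exact hpos
    have hb1top : T 1 ≠ ∞ := ne_top_of_le_ne_top ENNReal.one_ne_top (hTle 1)
    rw [ENNReal.inv_mul_le_iff hb1ne hb1top]
    -- goal : T (m+1) ≤ T 1 * T m
    have h01 : T 1 + w 0 = 1 := by
      have h := hsplit 0 (Nat.zero_le n)
      rw [hT0] at h
      rw [add_comm, show (0:ℕ) + 1 = 1 from rfl] at h
      exact h.symm
    have hq1 : T 1 = 1 - w 0 :=
      ENNReal.eq_sub_of_add_eq (ne_top_of_le_ne_top ENNReal.one_ne_top (hwle 0 (Nat.zero_le n))) h01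
    by_cases hmn : m ≤ n
    swap
    · rw [hTzero (m+1) (by omega)]; exact zero_le
    have hkeym := hkey m hm1
    rw [hq] at hkeym
    have hsplitm := hsplit m hmn
    have hwm_top : w m ≠ ∞ := ne_top_of_le_ne_top ENNReal.one_ne_top (hwle m hmn)
    -- T(m+1) = T m - w m
    have h1 : T (m + 1) = T m - w m := by
      rw [hsplitm, ENNReal.add_sub_cancel_left hwm_top]
    rw [h1, hq1, ENNReal.sub_mul (fun _ _ => ne_top_of_le_ne_top ENNReal.one_ne_top (hTle m)), one_mul]
    exact tsub_le_tsub_left hkeym (T m)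
end

section
/- The total variation distance between the Binomial(n, p) distribution and the Poisson(np) distribution is at most p. -/
open scoped ENNReal NNReal
open Finset

namespace Stmt10Aux

noncomputable def pw (L : ℝ) (k : ℕ) : ℝ := L ^ k / k.factorial

lemma pw_nonneg {L : ℝ} (hL : 0 ≤ L) (k : ℕ) : 0 ≤ pw L k := by
  unfold pw; positivity

lemma hasSum_pw (L : ℝ) : HasSum (pw L) (Real.exp L) := by
  rw [Real.exp_eq_exp_ℝ]
  exact NormedSpace.expSeries_div_hasSum_exp L

lemma summable_pw (L : ℝ) : Summable (pw L) := (hasSum_pw L).summable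

noncomputable def EE (L : ℝ) (j : ℕ) : ℝ := ∑ k ∈ range (j+1), pw L k

noncomputable def RR (L : ℝ) (j : ℕ) : ℝ := ∑' i : ℕ, pw L (i + (j+1))

lemma summable_pw_shift (L : ℝ) (j : ℕ) : Summable (fun i : ℕ => pw L (i + (j+1))) :=
  (summable_nat_add_iff (j+1)).2 (summable_pw L)

lemma EE_add_RR (L : ℝ) (j : ℕ) : EE L j + RR L j = Real.exp L := by
  have h := Summable.sum_add_tsum_nat_add (f := pw L) (j+1) (summable_pw L)
  rw [EE, RR, h, (hasSum_pw L).tsum_eq]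

lemma RR_nonneg {L : ℝ} (hL : 0 ≤ L) (j : ℕ) : 0 ≤ RR L j :=
  tsum_nonneg (fun i => pw_nonneg hL _)

lemma EE_nonneg {L : ℝ} (hL : 0 ≤ L) (j : ℕ) : 0 ≤ EE L j :=
  Finset.sum_nonneg (fun k _ => pw_nonneg hL _)

lemma pw_step {L : ℝ} (k : ℕ) : pw L (k+1) * (k+1) = L * pw L k := by
  rw [pw, pw, Nat.factorial_succ]
  have h1 : ((k:ℝ)+1) ≠ 0 := by positivity
  have h2 : ((k.factorial:ℝ)) ≠ 0 := by positivity
  field_simp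
  push_cast
  ring

/-- tail inequality: `(j+1) * RR L (j+1) ≤ L * RR L j`. -/
lemma tail_ineq {L : ℝ} (hL : 0 ≤ L) (j : ℕ) : (j+1 : ℝ) * RR L (j+1) ≤ L * RR L j := by
  have h1 : (j+1 : ℝ) * RR L (j+1) = ∑' i : ℕ, (j+1 : ℝ) * pw L (i + (j+2)) := by
    rw [RR, ← tsum_mul_left]
  have h2 : L * RR L j = ∑' i : ℕ, L * pw L (i + (j+1)) := by
    rw [RR, ← tsum_mul_left]
  rw [h1, h2]
  apply Summable.tsum_le_tsum _ ((summable_pw_shift L (j+1)).mul_left _)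
    ((summable_pw_shift L j).mul_left _)
  intro i
  have hstep := pw_step (L := L) (i + (j+1))
  have hip : i + (j+2) = i + (j+1) + 1 := by ring
  have hpw : 0 ≤ pw L (i + (j+1) + 1) := pw_nonneg hL _
  have hle : (j+1:ℝ) ≤ ((i:ℝ) + (j+1)) + 1 := by
    linarith [Nat.cast_nonneg (α := ℝ) i]
  calc (j+1:ℝ) * pw L (i + (j+2))
      = pw L (i + (j+1) + 1) * (j+1) := by rw [hip]; ring
    _ ≤ pw L (i + (j+1) + 1) * (((i:ℝ) + (j+1)) + 1) := by
        exact mul_le_mul_of_nonneg_left hle hpw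
    _ = L * pw L (i + (j+1)) := by rw [← hstep]; push_cast; ring

/-- `L * EE L j ≤ (j+1) * EE L (j+1)` -/
lemma EE_ineq {L : ℝ} (hL : 0 ≤ L) (j : ℕ) : L * EE L j ≤ (j+1 : ℝ) * EE L (j+1) := by
  have h1 : L * EE L j = ∑ k ∈ range (j+1), pw L (k+1) * (k+1) := by
    rw [EE, mul_sum]; exact Finset.sum_congr rfl (fun k _ => (pw_step k).symm)
  have h2 : ∑ k ∈ range (j+1), pw L (k+1) * ((k:ℝ)+1) ≤ ∑ k ∈ range (j+1), pw L (k+1) * ((j:ℝ)+1) := by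
    apply Finset.sum_le_sum
    intro k hk
    have hk' : (k:ℝ) + 1 ≤ (j:ℝ) + 1 := by
      have := Finset.mem_range.1 hk
      have : (k:ℝ) ≤ (j:ℝ) := by exact_mod_cast Nat.lt_succ_iff.1 this
      linarith
    exact mul_le_mul_of_nonneg_left hk' (pw_nonneg hL _)
  have h3 : ∑ k ∈ range (j+1), pw L (k+1) * ((j:ℝ)+1) ≤ ((j:ℝ)+1) * EE L (j+1) := by
    have hsucc : EE L (j+1) = ∑ k ∈ range (j+1), pw L (k+1) + pw L 0 :=
      Finset.sum_range_succ' (pw L) (j+1)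
    have h0 : 0 ≤ pw L 0 := pw_nonneg hL _
    rw [hsucc]
    have : ∑ k ∈ range (j+1), pw L (k+1) * ((j:ℝ)+1)
        = ((j:ℝ)+1) * ∑ k ∈ range (j+1), pw L (k+1) := by
      rw [Finset.mul_sum]; exact Finset.sum_congr rfl (fun k _ => by ring)
    rw [this]
    nlinarith [Nat.cast_nonneg (α := ℝ) j]
  calc L * EE L j = ∑ k ∈ range (j+1), pw L (k+1) * ((k:ℝ)+1) := h1
    _ ≤ _ := h2
    _ ≤ _ := h3

noncomputable def uu (L : ℝ) (j : ℕ) : ℝ := j.factorial / L^(j+1)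

noncomputable def kp (L : ℝ) (j : ℕ) : ℝ := uu L (j+1) - uu L j

noncomputable def DD (L : ℝ) (j : ℕ) : ℝ := 1/L + kp L j * EE L j

lemma kp_eq {L : ℝ} (hL : 0 < L) (j : ℕ) :
    kp L j = ((j:ℝ) + 1 - L) * j.factorial / L^(j+2) := by
  have hLne : L ≠ 0 := ne_of_gt hL
  rw [kp, uu, uu, Nat.factorial_succ]
  field_simp
  push_cast
  ring

lemma RR_succ (L : ℝ) (j : ℕ) : RR L j = pw L (j+1) + RR L (j+1) := by
  rw [RR, RR, Summable.tsum_eq_zero_add (summable_pw_shift L j)]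
  congr 1
  · simp
  · exact tsum_congr (fun i => by congr 1; omega)

lemma DD_nonneg {L : ℝ} (hL : 0 < L) (j : ℕ) : 0 ≤ DD L j := by
  rcases le_or_gt 0 (kp L j) with hk | hk
  · have := EE_nonneg hL.le j
    have h1 : 0 < 1/L := by positivity
    rw [DD]; nlinarith
  · -- kp < 0, i.e. L > j+1
    have hEE := EE_ineq hL.le j
    have hEsucc : EE L (j+1) = EE L j + pw L (j+1) := Finset.sum_range_succ (pw L) (j+1)
    have hpw : pw L (j+1) = L^(j+1) / (j+1).factorial := rfl
    have hfac : ((j+1).factorial : ℝ) = (j+1) * j.factorial := by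
      rw [Nat.factorial_succ]; push_cast; ring
    have hfacpos : (0:ℝ) < j.factorial := by positivity
    have hLp : (0:ℝ) < L^(j+1) := by positivity
    have hLp2 : (0:ℝ) < L^(j+2) := by positivity
    -- L * EE j - (j+1) * EE j ≤ L^(j+1)/j!
    have key : (L - ((j:ℝ)+1)) * EE L j ≤ L^(j+1) / j.factorial := by
      have h2 : ((j:ℝ)+1) * pw L (j+1) = L^(j+1) / j.factorial := by
        rw [hpw, hfac]
        field_simp
      nlinarith [hEE, hEsucc]
    rw [DD, kp_eq hL, div_mul_eq_mul_div]
    have hid : L^(j+1)/(j.factorial:ℝ) * j.factorial = L^(j+1) := by field_simp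
    have h3 : -(L^(j+1)) ≤ ((j:ℝ) + 1 - L) * (j.factorial) * EE L j := by
      nlinarith [mul_le_mul_of_nonneg_right key hfacpos.le, hid]
    have hdivid : L^(j+1)/L^(j+2) = 1/L := by
      rw [pow_succ]; field_simp; ring
    have h4 : (-(L^(j+1)))/L^(j+2) ≤ ((j:ℝ) + 1 - L) * (j.factorial) * EE L j / L^(j+2) :=
      div_le_div_of_nonneg_right h3 hLp2.le
    rw [neg_div, hdivid] at h4
    linarith

lemma kp_mul_RR {L : ℝ} (hL : 0 < L) (j : ℕ) : kp L j * RR L j ≤ 1/L := by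
  rcases le_or_gt (kp L j) 0 with hk | hk
  · have := RR_nonneg hL.le j
    have h1 : 0 < 1/L := by positivity
    nlinarith
  · have htail := tail_ineq hL.le j
    have hRsucc := RR_succ L j
    have hfac : ((j+1).factorial : ℝ) = (j+1) * j.factorial := by
      rw [Nat.factorial_succ]; push_cast; ring
    have hfacpos : (0:ℝ) < j.factorial := by positivity
    have hLp2 : (0:ℝ) < L^(j+2) := by positivity
    have h2 : ((j:ℝ)+1) * pw L (j+1) = L^(j+1) / j.factorial := by
      rw [pw, hfac]
      field_simp
    have key : (((j:ℝ)+1) - L) * RR L j ≤ L^(j+1) / j.factorial := by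
      nlinarith [htail, hRsucc]
    have hLp : (0:ℝ) < L^(j+1) := by positivity
    have hid : L^(j+1)/(j.factorial:ℝ) * j.factorial = L^(j+1) := by field_simp
    have h3 : ((j:ℝ) + 1 - L) * (j.factorial) * RR L j ≤ L^(j+1) := by
      nlinarith [mul_le_mul_of_nonneg_right key hfacpos.le, hid]
    have hdivid : L^(j+1)/L^(j+2) = 1/L := by
      rw [pow_succ]; field_simp; ring
    rw [kp_eq hL, div_mul_eq_mul_div, ← hdivid]
    exact div_le_div_of_nonneg_right h3 hLp2.le

lemma kp_le_exp_DD {L : ℝ} (hL : 0 < L) (j : ℕ) : kp L j ≤ Real.exp (-L) * DD L j := by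
  have h1 : kp L j * Real.exp L ≤ DD L j := by
    have h := kp_mul_RR hL j
    have hE := EE_add_RR L j
    have hsplit : kp L j * Real.exp L = kp L j * EE L j + kp L j * RR L j := by
      rw [← hE]; ring
    rw [DD]; linarith
  have h2 : Real.exp (-L) * (kp L j * Real.exp L) = kp L j := by
    have hh : Real.exp (-L) * Real.exp L = 1 := by rw [← Real.exp_add]; simp
    calc Real.exp (-L) * (kp L j * Real.exp L) = kp L j * (Real.exp (-L) * Real.exp L) := by ring
      _ = kp L j := by rw [hh, mul_one]
  calc kp L j = Real.exp (-L) * (kp L j * Real.exp L) := h2.symm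
    _ ≤ Real.exp (-L) * DD L j := by
        exact mul_le_mul_of_nonneg_left h1 (Real.exp_nonneg _)

/-- Poisson pmf weight (real). -/
noncomputable def pois (L : ℝ) (k : ℕ) : ℝ := Real.exp (-L) * pw L k

lemma pois_nonneg {L : ℝ} (hL : 0 ≤ L) (k : ℕ) : 0 ≤ pois L k :=
  mul_nonneg (Real.exp_nonneg _) (pw_nonneg hL k)

lemma hasSum_pois (L : ℝ) : HasSum (pois L) 1 := by
  have := (hasSum_pw L).mul_left (Real.exp (-L))
  rw [← Real.exp_add] at this
  simp only [neg_add_cancel, Real.exp_zero] at this; exact this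

lemma summable_pois (L : ℝ) : Summable (pois L) := (hasSum_pois L).summable

lemma summable_ind (L : ℝ) (s : Set ℕ) : Summable (s.indicator (pois L)) :=
  (summable_pois L).indicator s

noncomputable def SS (L : ℝ) (s : Set ℕ) (j : ℕ) : ℝ := ∑ k ∈ range (j+1), s.indicator (pw L) k

noncomputable def PP (L : ℝ) (s : Set ℕ) : ℝ := ∑' k : ℕ, s.indicator (pois L) k

noncomputable def gg (L : ℝ) (s : Set ℕ) : ℕ → ℝ
  | 0 => 0
  | (j+1) => uu L j * (SS L s j - PP L s * EE L j)

lemma PP_nonneg {L : ℝ} (hL : 0 ≤ L) (s : Set ℕ) : 0 ≤ PP L s :=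
  tsum_nonneg (fun k => Set.indicator_nonneg (fun a _ => pois_nonneg hL a) k)

lemma PP_add_compl {L : ℝ} (s : Set ℕ) : PP L s + PP L sᶜ = 1 := by
  rw [PP, PP, ← Summable.tsum_add (summable_ind L s) (summable_ind L sᶜ)]
  rw [← (hasSum_pois L).tsum_eq]
  exact tsum_congr (fun k => by rw [Set.indicator_self_add_compl_apply])

lemma sum_ind_le_PP {L : ℝ} (hL : 0 ≤ L) (s : Set ℕ) (N : ℕ) :
    ∑ k ∈ range N, s.indicator (pois L) k ≤ PP L s :=
  Summable.sum_le_tsum (range N) (fun k _ => Set.indicator_nonneg (fun a _ => pois_nonneg hL a) k)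
    (summable_ind L s)

lemma uu_mul_pw {L : ℝ} (hL : 0 < L) (j : ℕ) : uu L (j+1) * pw L (j+1) = 1/L := by
  have h1 : ((j+1).factorial : ℝ) ≠ 0 := by positivity
  have h2 : L ≠ 0 := ne_of_gt hL
  rw [uu, pw]
  field_simp
  ring

lemma gg_diff {L : ℝ} (hL : 0 < L) (s : Set ℕ) (j : ℕ) :
    gg L s (j+2) - gg L s (j+1)
      = s.indicator (fun _ => 1/L) (j+1) + kp L j * SS L s j - PP L s * DD L j := by
  have hS : SS L s (j+1) = SS L s j + s.indicator (pw L) (j+1) :=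
    Finset.sum_range_succ _ (j+1)
  have hE : EE L (j+1) = EE L j + pw L (j+1) := Finset.sum_range_succ _ (j+1)
  have hupw := uu_mul_pw hL j
  have hind : uu L (j+1) * s.indicator (pw L) (j+1) = s.indicator (fun _ => 1/L) (j+1) := by
    by_cases h : (j+1) ∈ s
    · rw [Set.indicator_of_mem h, Set.indicator_of_mem h, hupw]
    · rw [Set.indicator_of_notMem h, Set.indicator_of_notMem h, mul_zero]
  show uu L (j+1) * (SS L s (j+1) - PP L s * EE L (j+1)) - uu L j * (SS L s j - PP L s * EE L j) = _
  rw [hS, hE, DD, kp]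
  linear_combination hind - PP L s * hupw
lemma gg_diff_le {L : ℝ} (hL : 0 < L) (s : Set ℕ) (j : ℕ) :
    gg L s (j+2) - gg L s (j+1) ≤ 1/L := by
  rw [gg_diff hL s j]
  have hDD := DD_nonneg hL j
  have hkp := kp_le_exp_DD hL j
  have hsub := sum_ind_le_PP hL.le s (j+1)
  have h1 : DD L j * (∑ k ∈ range (j+1), s.indicator (pois L) k) ≤ DD L j * PP L s :=
    mul_le_mul_of_nonneg_left hsub hDD
  have h2 : kp L j * SS L s j ≤ DD L j * ∑ k ∈ range (j+1), s.indicator (pois L) k := by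
    rw [SS, Finset.mul_sum, Finset.mul_sum]
    apply Finset.sum_le_sum
    intro k _
    by_cases hk : k ∈ s
    · rw [Set.indicator_of_mem hk, Set.indicator_of_mem hk, pois]
      have hp := pw_nonneg hL.le k
      nlinarith [mul_le_mul_of_nonneg_right hkp hp]
    · simp [Set.indicator_of_notMem hk]
  have h3 : s.indicator (fun _ => 1/L) (j+1) ≤ 1/L := by
    by_cases h : (j+1) ∈ s
    · rw [Set.indicator_of_mem h]
    · rw [Set.indicator_of_notMem h]; positivity
  nlinarith [h1, h2, h3]

lemma EE_eq_SS_add_compl (L : ℝ) (s : Set ℕ) (j : ℕ) :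
    EE L j = SS L s j + SS L sᶜ j := by
  rw [EE, SS, SS, ← Finset.sum_add_distrib]
  exact Finset.sum_congr rfl (fun k _ => (Set.indicator_self_add_compl_apply s (pw L) k).symm)

lemma neg_le_gg_diff {L : ℝ} (hL : 0 < L) (s : Set ℕ) (j : ℕ) :
    -(1/L) ≤ gg L s (j+2) - gg L s (j+1) := by
  have hid : gg L s (j+2) - gg L s (j+1)
      = PP L sᶜ * DD L j - kp L j * SS L sᶜ j - sᶜ.indicator (fun _ => 1/L) (j+1) := by
    rw [gg_diff hL s j]
    have hPc : PP L s = 1 - PP L sᶜ := by linarith [PP_add_compl (L := L) s]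
    have hSc : SS L s j = EE L j - SS L sᶜ j := by
      linarith [EE_eq_SS_add_compl L s j]
    have hic : s.indicator (fun _ => (1:ℝ)/L) (j+1) = 1/L - sᶜ.indicator (fun _ => (1:ℝ)/L) (j+1) := by
      have := Set.indicator_self_add_compl_apply s (fun _ => (1:ℝ)/L) (j+1)
      linarith [this]
    rw [hic, hSc, hPc, DD]; ring
  rw [hid]
  have hDD := DD_nonneg hL j
  have hkp := kp_le_exp_DD hL j
  have hsub := sum_ind_le_PP hL.le sᶜ (j+2)
  have hsplit : ∑ k ∈ range (j+2), sᶜ.indicator (pois L) k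
      = (∑ k ∈ range (j+1), sᶜ.indicator (pois L) k) + sᶜ.indicator (pois L) (j+1) :=
    Finset.sum_range_succ _ _
  have h1 : DD L j * (∑ k ∈ range (j+2), sᶜ.indicator (pois L) k) ≤ DD L j * PP L sᶜ :=
    mul_le_mul_of_nonneg_left hsub hDD
  have h2 : kp L j * SS L sᶜ j ≤ DD L j * ∑ k ∈ range (j+1), sᶜ.indicator (pois L) k := by
    rw [SS, Finset.mul_sum, Finset.mul_sum]
    apply Finset.sum_le_sum
    intro k _
    by_cases hk : k ∈ sᶜ
    · rw [Set.indicator_of_mem hk, Set.indicator_of_mem hk, pois]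
      have hp := pw_nonneg hL.le k
      nlinarith [mul_le_mul_of_nonneg_right hkp hp]
    · simp [Set.indicator_of_notMem hk]
  have h3 : sᶜ.indicator (fun _ => (1:ℝ)/L) (j+1) - DD L j * sᶜ.indicator (pois L) (j+1) ≤ 1/L := by
    by_cases h : (j+1) ∈ sᶜ
    · rw [Set.indicator_of_mem h, Set.indicator_of_mem h]
      have := mul_nonneg hDD (pois_nonneg hL.le (j+1))
      linarith
    · rw [Set.indicator_of_notMem h, Set.indicator_of_notMem h]
      have : (0:ℝ) ≤ 1/L := by positivity
      linarith
  nlinarith [h1, h2, h3, hsplit]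

lemma abs_gg_diff_le {L : ℝ} (hL : 0 < L) (s : Set ℕ) (j : ℕ) :
    |gg L s (j+2) - gg L s (j+1)| ≤ 1/L :=
  abs_le.2 ⟨neg_le_gg_diff hL s j, gg_diff_le hL s j⟩
lemma stein {L : ℝ} (hL : 0 < L) (s : Set ℕ) (j : ℕ) :
    L * gg L s (j+1) - j * gg L s j = s.indicator (fun _ => (1:ℝ)) j - PP L s := by
  have hLne : L ≠ 0 := ne_of_gt hL
  cases j with
  | zero =>
    have hg1 : gg L s 1 = uu L 0 * (SS L s 0 - PP L s * EE L 0) := rfl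
    have hg0 : gg L s 0 = 0 := rfl
    rw [hg1, hg0]
    push_cast
    have huu : uu L 0 = 1/L := by rw [uu]; norm_num
    have hEE : EE L 0 = 1 := by rw [EE]; simp [pw]
    have hSS : SS L s 0 = s.indicator (fun _ => (1:ℝ)) 0 := by
      rw [SS, show (0:ℕ)+1 = 1 from rfl, Finset.sum_range_one]
      by_cases h : (0:ℕ) ∈ s
      · rw [Set.indicator_of_mem h, Set.indicator_of_mem h, pw]; norm_num
      · rw [Set.indicator_of_notMem h, Set.indicator_of_notMem h]
    rw [huu, hEE, hSS]
    field_simp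
    simp
  | succ j =>
    have hg2 : gg L s (j+1+1) = uu L (j+1) * (SS L s (j+1) - PP L s * EE L (j+1)) := rfl
    have hg1 : gg L s (j+1) = uu L j * (SS L s j - PP L s * EE L j) := rfl
    rw [hg2, hg1]
    push_cast
    have hA : L * uu L (j+1) = ((j:ℝ)+1) * uu L j := by
      rw [uu, uu, Nat.factorial_succ]
      push_cast
      field_simp
      ring
    have hB : L * (uu L (j+1) * pw L (j+1)) = 1 := by
      rw [uu_mul_pw hL]; field_simp
    have hS : SS L s (j+1) = SS L s j + s.indicator (pw L) (j+1) :=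
      Finset.sum_range_succ _ (j+1)
    have hE : EE L (j+1) = EE L j + pw L (j+1) := Finset.sum_range_succ _ (j+1)
    have hC : L * (uu L (j+1) * s.indicator (pw L) (j+1)) = s.indicator (fun _ => (1:ℝ)) (j+1) := by
      by_cases h : (j+1) ∈ s
      · rw [Set.indicator_of_mem h, Set.indicator_of_mem h, hB]
      · rw [Set.indicator_of_notMem h, Set.indicator_of_notMem h, mul_zero, mul_zero]
    rw [hS, hE]
    linear_combination (SS L s j - PP L s * EE L j) * hA + hC - PP L s * hB

/-- real binomial weight -/
noncomputable def bb (p : ℝ) (n k : ℕ) : ℝ := (n.choose k) * p^k * (1-p)^(n-k)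

lemma bb_nonneg {p : ℝ} (hp0 : 0 ≤ p) (hp1 : p ≤ 1) (n k : ℕ) : 0 ≤ bb p n k := by
  have : 0 ≤ 1 - p := by linarith
  rw [bb]; positivity

lemma sum_bb (p : ℝ) (n : ℕ) : ∑ k ∈ range (n+1), bb p n k = 1 := by
  have h := add_pow p (1-p) n
  have h2 : (p + (1-p)) = 1 := by ring
  rw [h2, one_pow] at h
  rw [h]
  exact Finset.sum_congr rfl (fun k _ => by rw [bb]; ring)

lemma bb_succ_mul (p : ℝ) (m j : ℕ) (hj : j ∈ range (m+1)) :
    bb p (m+1) (j+1) * ((j:ℝ)+1) = ((m:ℝ)+1) * p * bb p m j := by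
  have hc : ((m:ℝ)+1) * (m.choose j) = ((m+1).choose (j+1)) * ((j:ℝ)+1) := by
    have := Nat.add_one_mul_choose_eq m j
    exact_mod_cast congrArg (Nat.cast : ℕ → ℝ) this
  have hsub : m + 1 - (j+1) = m - j := by omega
  rw [bb, bb, hsub, pow_succ]
  linear_combination (-(p^j * p * (1-p)^(m-j))) * hc
lemma sumA (p : ℝ) (m : ℕ) (g : ℕ → ℝ) :
    ∑ k ∈ range (m+2), bb p (m+1) k * ((k:ℝ) * g k)
      = ∑ j ∈ range (m+1), ((m:ℝ)+1) * p * bb p m j * g (j+1) := by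
  rw [Finset.sum_range_succ' (fun k => bb p (m+1) k * ((k:ℝ) * g k)) (m+1)]
  simp only [Nat.cast_zero, zero_mul, mul_zero, add_zero]
  apply Finset.sum_congr rfl
  intro j hj
  have h := bb_succ_mul p m j hj
  push_cast
  linear_combination g (j+1) * h

lemma bb_zero_of_lt (p : ℝ) {m k : ℕ} (h : m < k) : bb p m k = 0 := by
  rw [bb, Nat.choose_eq_zero_of_lt h]
  norm_num

lemma bb_pascal (p : ℝ) (m k : ℕ) :
    bb p (m+1) (k+1) = (1-p) * bb p m (k+1) + p * bb p m k := by
  rcases le_or_gt (k+1) m with h | h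
  · have hc : (((m+1).choose (k+1)) : ℝ) = m.choose k + m.choose (k+1) := by
      exact_mod_cast congrArg (Nat.cast : ℕ → ℝ) (Nat.choose_succ_succ m k)
    have hsub1 : m + 1 - (k+1) = (m - (k+1)) + 1 := by omega
    have hsub2 : m - k = (m - (k+1)) + 1 := by omega
    rw [bb, bb, bb, hc, hsub1, hsub2, pow_succ, pow_succ]
    ring
  · rcases Nat.eq_or_lt_of_le (by omega : m ≤ k) with he | hlt
    · subst he
      have h1 : bb p m (m+1) = 0 := bb_zero_of_lt p (by omega)
      have h2 : bb p (m+1) (m+1) = p^(m+1) := by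
        rw [bb, Nat.choose_self, Nat.sub_self]
        norm_num
      have h3 : bb p m m = p^m := by
        rw [bb, Nat.choose_self, Nat.sub_self]
        norm_num
      rw [h1, h2, h3, pow_succ]
      ring
    · have h1 : bb p m (k+1) = 0 := bb_zero_of_lt p (by omega)
      have h2 : bb p (m+1) (k+1) = 0 := bb_zero_of_lt p (by omega)
      have h3 : bb p m k = 0 := bb_zero_of_lt p hlt
      rw [h1, h2, h3]
      ring

lemma sumB (p : ℝ) (m : ℕ) (g : ℕ → ℝ) :
    ∑ k ∈ range (m+2), bb p (m+1) k * g (k+1)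
      = ∑ j ∈ range (m+1), bb p m j * ((1-p) * g (j+1) + p * g (j+2)) := by
  have h1 : ∀ k, bb p (m+1) k * g (k+1)
      = (1-p) * (bb p m k * g (k+1)) + p * (if k = 0 then 0 else bb p m (k-1) * g (k+1)) := by
    intro k
    cases k with
    | zero =>
      rw [if_pos rfl, bb, bb]
      simp only [Nat.choose_zero_right, Nat.sub_zero, Nat.cast_one, pow_zero, pow_succ]
      ring
    | succ k =>
      simp only [Nat.succ_sub_one, if_neg (Nat.succ_ne_zero k)]
      rw [bb_pascal p m k]
      ring
  rw [Finset.sum_congr rfl (fun k _ => h1 k), Finset.sum_add_distrib]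
  have hfirst : ∑ k ∈ range (m+2), (1-p) * (bb p m k * g (k+1))
      = ∑ j ∈ range (m+1), (1-p) * (bb p m j * g (j+1)) := by
    rw [Finset.sum_range_succ]
    rw [bb_zero_of_lt p (by omega : m < m+1)]
    simp
  have hsecond : ∑ k ∈ range (m+2), p * (if k = 0 then 0 else bb p m (k-1) * g (k+1))
      = ∑ j ∈ range (m+1), p * (bb p m j * g (j+2)) := by
    rw [Finset.sum_range_succ' (fun k => p * (if k = 0 then 0 else bb p m (k-1) * g (k+1))) (m+1)]
    simp only [if_pos rfl, mul_zero, add_zero, if_neg (Nat.succ_ne_zero _), Nat.succ_sub_one]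
    norm_num
  rw [hfirst, hsecond, ← Finset.sum_add_distrib]
  exact Finset.sum_congr rfl (fun j _ => by ring)

theorem core_bound (m : ℕ) (p : ℝ) (hp0 : 0 < p) (hp1 : p ≤ 1) (s : Set ℕ) :
    |(∑ k ∈ range (m+2), s.indicator (fun _ => (1:ℝ)) k * bb p (m+1) k)
      - PP (((m:ℝ)+1)*p) s| ≤ p := by
  set L := ((m:ℝ)+1)*p with hLdef
  have hL : 0 < L := by positivity
  have key : ∑ k ∈ range (m+2), bb p (m+1) k * (L * gg L s (k+1) - (k:ℝ) * gg L s k)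
      = (∑ k ∈ range (m+2), s.indicator (fun _ => (1:ℝ)) k * bb p (m+1) k) - PP L s := by
    have hterm : ∀ k, bb p (m+1) k * (L * gg L s (k+1) - (k:ℝ) * gg L s k)
        = s.indicator (fun _ => (1:ℝ)) k * bb p (m+1) k - PP L s * bb p (m+1) k := by
      intro k; rw [stein hL s k]; ring
    rw [Finset.sum_congr rfl (fun k _ => hterm k), Finset.sum_sub_distrib,
      ← Finset.mul_sum, sum_bb, mul_one]
  have htrans : ∑ k ∈ range (m+2), bb p (m+1) k * (L * gg L s (k+1) - (k:ℝ) * gg L s k)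
      = L * p * ∑ j ∈ range (m+1), bb p m j * (gg L s (j+2) - gg L s (j+1)) := by
    have e1 : ∑ k ∈ range (m+2), bb p (m+1) k * (L * gg L s (k+1) - (k:ℝ) * gg L s k)
        = L * (∑ k ∈ range (m+2), bb p (m+1) k * gg L s (k+1))
          - (∑ k ∈ range (m+2), bb p (m+1) k * ((k:ℝ) * gg L s k)) := by
      rw [Finset.mul_sum, ← Finset.sum_sub_distrib]
      exact Finset.sum_congr rfl (fun k _ => by ring)
    rw [e1, sumB p m (gg L s), sumA p m (gg L s), Finset.mul_sum, ← Finset.sum_sub_distrib,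
      Finset.mul_sum]
    apply Finset.sum_congr rfl
    intro j _
    simp only [hLdef]
    ring
  have habs : |∑ j ∈ range (m+1), bb p m j * (gg L s (j+2) - gg L s (j+1))| ≤ 1/L := by
    calc |∑ j ∈ range (m+1), bb p m j * (gg L s (j+2) - gg L s (j+1))|
        ≤ ∑ j ∈ range (m+1), |bb p m j * (gg L s (j+2) - gg L s (j+1))| :=
          Finset.abs_sum_le_sum_abs _ _
      _ ≤ ∑ j ∈ range (m+1), bb p m j * (1/L) := by
          apply Finset.sum_le_sum
          intro j _
          rw [abs_mul, abs_of_nonneg (bb_nonneg hp0.le hp1 m j)]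
          exact mul_le_mul_of_nonneg_left (abs_gg_diff_le hL s j) (bb_nonneg hp0.le hp1 m j)
      _ = 1/L := by rw [← Finset.sum_mul, sum_bb, one_mul]
  have : (∑ k ∈ range (m+2), s.indicator (fun _ => (1:ℝ)) k * bb p (m+1) k) - PP L s
      = L * p * ∑ j ∈ range (m+1), bb p m j * (gg L s (j+2) - gg L s (j+1)) := by
    rw [← key, htrans]
  rw [this, abs_mul, abs_of_pos (by positivity : (0:ℝ) < L * p)]
  calc L * p * |∑ j ∈ range (m+1), bb p m j * (gg L s (j+2) - gg L s (j+1))|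
      ≤ L * p * (1/L) := mul_le_mul_of_nonneg_left habs (by positivity)
    _ = p := by field_simp

lemma poisson_toReal (r : ℝ≥0) (s : Set ℕ) :
    ((ProbabilityTheory.poissonMeasure r) s).toReal = PP (r:ℝ) s := by
  have hms : MeasurableSet s := trivial
  rw [ProbabilityTheory.poissonMeasure, MeasureTheory.Measure.sum_apply _ hms]
  rw [ENNReal.tsum_toReal_eq]
  · rw [PP]
    apply tsum_congr
    intro k
    rw [MeasureTheory.Measure.smul_apply, MeasureTheory.Measure.dirac_apply' _ hms, smul_eq_mul]
    by_cases hk : k ∈ s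
    · rw [Set.indicator_of_mem hk, Set.indicator_of_mem hk, Pi.one_apply, mul_one]
      rw [ENNReal.toReal_ofReal (by positivity)]
      rw [pois, pw]
      ring
    · rw [Set.indicator_of_notMem hk, Set.indicator_of_notMem hk, mul_zero, ENNReal.toReal_zero]
  · intro k
    rw [MeasureTheory.Measure.smul_apply, MeasureTheory.Measure.dirac_apply' _ hms, smul_eq_mul]
    exact ENNReal.mul_ne_top ENNReal.ofReal_ne_top (by by_cases hk : k ∈ s <;> simp [hk])

lemma binomial_toReal (n : ℕ) (p : ℝ≥0) (hp' : (p : ℝ≥0∞) ≤ 1) (s : Set ℕ) :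
    ((((PMF.binomial p (ENNReal.coe_le_one_iff.mp hp') n).map (Fin.val : Fin (n+1) → ℕ)).toMeasure) s).toReal
      = ∑ k ∈ range (n+1), s.indicator (fun _ => (1:ℝ)) k * bb (p:ℝ) n k := by
  have hms : MeasurableSet s := trivial
  have hmeas : Measurable (Fin.val : Fin (n+1) → ℕ) := fun _ _ => trivial
  rw [PMF.toMeasure_map_apply _ _ _ hmeas hms, PMF.toMeasure_apply_fintype]
  rw [ENNReal.toReal_sum (fun a _ => by
    by_cases hk : a ∈ (Fin.val ⁻¹' s)
    · rw [Set.indicator_of_mem hk]; exact PMF.apply_ne_top _ _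
    · rw [Set.indicator_of_notMem hk]; exact ENNReal.zero_ne_top)]
  have hterm : ∀ a : Fin (n+1), ((Fin.val ⁻¹' s).indicator (⇑(PMF.binomial p (ENNReal.coe_le_one_iff.mp hp') n)) a).toReal
      = s.indicator (fun _ => (1:ℝ)) a.val * bb (p:ℝ) n a.val := by
    intro a
    by_cases ha : a.val ∈ s
    · have ha' : a ∈ (Fin.val ⁻¹' s) := ha
      rw [Set.indicator_of_mem ha', Set.indicator_of_mem ha, one_mul]
      rw [PMF.binomial_apply]
      have h1p : ((1:ℝ≥0∞) - (p:ℝ≥0∞)).toReal = 1 - (p:ℝ) := by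
        rw [ENNReal.toReal_sub_of_le hp' ENNReal.one_ne_top, ENNReal.toReal_one,
          ENNReal.coe_toReal]
      rw [Fin.val_last, ENNReal.toReal_mul, ENNReal.toReal_mul, ENNReal.toReal_pow, ENNReal.toReal_pow,
        ENNReal.coe_toReal, h1p]
      simp only [ENNReal.toReal_natCast]
      rw [bb]
      ring
    · have ha' : a ∉ (Fin.val ⁻¹' s) := ha
      rw [Set.indicator_of_notMem ha', Set.indicator_of_notMem ha, ENNReal.toReal_zero, zero_mul]
  rw [Finset.sum_congr rfl (fun a _ => hterm a)]
  exact Fin.sum_univ_eq_sum_range (fun k => s.indicator (fun _ => (1:ℝ)) k * bb (p:ℝ) n k) (n+1)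

lemma PP_zero (s : Set ℕ) : PP 0 s = s.indicator (fun _ => (1:ℝ)) 0 := by
  rw [PP, tsum_eq_single 0]
  · by_cases h : (0:ℕ) ∈ s
    · rw [Set.indicator_of_mem h, Set.indicator_of_mem h, pois, pw]
      norm_num
    · rw [Set.indicator_of_notMem h, Set.indicator_of_notMem h]
  · intro k hk
    by_cases h : k ∈ s
    · rw [Set.indicator_of_mem h, pois, pw, zero_pow hk]
      norm_num
    · rw [Set.indicator_of_notMem h]

lemma bin_sum_zero (n : ℕ) (s : Set ℕ) :
    ∑ k ∈ range (n+1), s.indicator (fun _ => (1:ℝ)) k * bb 0 n k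
      = s.indicator (fun _ => (1:ℝ)) 0 := by
  rw [Finset.sum_eq_single 0]
  · have : bb 0 n 0 = 1 := by rw [bb]; norm_num
    rw [this, mul_one]
  · intro k _ hk0
    have : bb 0 n k = 0 := by rw [bb, zero_pow hk0]; ring
    rw [this, mul_zero]
  · intro h
    exact absurd (Finset.mem_range.2 (Nat.succ_pos n)) h

end Stmt10Aux

/-- `d_TV(Bin(n,p), Poi(np)) ≤ p`: for every event `s ⊆ ℕ`, the probabilities
assigned by the binomial and the Poisson distribution differ by at most `p`. -/
theorem stmt10 (n : ℕ) (p : ℝ≥0) (hp' : (p : ℝ≥0∞) ≤ 1)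
    (binMeasure : MeasureTheory.Measure ℕ)
    (hbin : binMeasure =
      ((PMF.binomial p (ENNReal.coe_le_one_iff.mp hp') n).map (Fin.val : Fin (n+1) → ℕ)).toMeasure) :
    ∀ s : Set ℕ,
      |(binMeasure s).toReal - ((ProbabilityTheory.poissonMeasure (n * p)) s).toReal|
        ≤ (p : ℝ) := by
  intro s
  subst hbin
  rw [Stmt10Aux.binomial_toReal n p hp' s, Stmt10Aux.poisson_toReal (n * p) s]
  have hp1 : (p:ℝ) ≤ 1 := by
    have := ENNReal.coe_le_one_iff.1 hp'
    exact_mod_cast this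
  have hp0 : (0:ℝ) ≤ (p:ℝ) := p.coe_nonneg
  have hcast : (((n : ℝ≥0) * p : ℝ≥0) : ℝ) = (n:ℝ) * (p:ℝ) := by push_cast; ring
  rcases Nat.eq_zero_or_pos n with hn | hn
  · subst hn
    have h0 : (((0 : ℕ) : ℝ≥0) * p : ℝ≥0) = 0 := by simp
    rw [h0]
    have : ((0 : ℝ≥0) : ℝ) = 0 := by norm_num
    rw [this, Stmt10Aux.PP_zero]
    rw [Finset.sum_range_one]
    have hbb : Stmt10Aux.bb (p:ℝ) 0 0 = 1 := by rw [Stmt10Aux.bb]; norm_num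
    rw [hbb, mul_one, sub_self, abs_zero]
    exact hp0
  · rcases eq_or_lt_of_le hp0 with hp | hp
    · -- p = 0
      have hpz : (p:ℝ) = 0 := hp.symm
      have h0 : ((n : ℝ≥0) * p : ℝ≥0) = 0 := by
        have : p = 0 := by exact_mod_cast hpz
        rw [this, mul_zero]
      rw [h0]
      have hz : ((0 : ℝ≥0) : ℝ) = 0 := by norm_num
      rw [hz, Stmt10Aux.PP_zero, hpz, Stmt10Aux.bin_sum_zero, sub_self, abs_zero]
    · obtain ⟨m, rfl⟩ : ∃ m, n = m + 1 := ⟨n - 1, by omega⟩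
      have hc : ((((m+1 : ℕ) : ℝ≥0) * p : ℝ≥0) : ℝ) = ((m:ℝ)+1) * (p:ℝ) := by
        push_cast; ring
      rw [hc]
      exact Stmt10Aux.core_bound m (p:ℝ) hp hp1 s
end

section
/- For any λ, λ' ≥ 0, the total variation distance between the Poisson(λ) and Poisson(λ') distributions is at most |λ − λ'|. -/
open scoped ENNReal NNReal

open Real MeasureTheory ProbabilityTheory

/-- Poisson density as a function of the (real) rate. -/
noncomputable def poiF (k : ℕ) (t : ℝ) : ℝ := Real.exp (-t) * t ^ k / k.factorial

/-- The derivative of `poiF k` in the rate. -/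
noncomputable def poiD (k : ℕ) (t : ℝ) : ℝ :=
  (if k = 0 then 0 else poiF (k - 1) t) - poiF k t

lemma hasDerivAt_poiF (k : ℕ) (t : ℝ) : HasDerivAt (poiF k) (poiD k t) t := by
  have h1 : HasDerivAt (fun t : ℝ => Real.exp (-t)) (-Real.exp (-t)) t := by
    exact ((Real.hasDerivAt_exp (-t)).comp t (hasDerivAt_neg t)).congr_deriv (by simp)
  have h2 : HasDerivAt (fun t : ℝ => t ^ k) (k * t ^ (k - 1)) t := hasDerivAt_pow k t
  have h3 := (h1.mul h2).div_const (k.factorial : ℝ)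
  refine h3.congr_deriv (Eq.symm ?_)
  unfold poiD poiF
  cases k with
  | zero => simp
  | succ n =>
    have hfac : ((n+1).factorial : ℝ) ≠ 0 := Nat.cast_ne_zero.mpr (Nat.factorial_ne_zero _)
    have hfac' : ((n).factorial : ℝ) ≠ 0 := Nat.cast_ne_zero.mpr (Nat.factorial_ne_zero _)
    simp only [Nat.succ_ne_zero, if_false, Nat.add_sub_cancel]
    rw [Nat.factorial_succ]
    push_cast
    field_simp
    ring

lemma summable_poiF (t : ℝ) : Summable (fun k => poiF k t) := by
  have := (Real.summable_pow_div_factorial t).mul_left (Real.exp (-t))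
  refine this.congr fun k => ?_
  simp [poiF, mul_div_assoc]

lemma hasSum_poiF {t : ℝ} (ht : 0 ≤ t) : HasSum (fun k => poiF k t) 1 := by
  have := ProbabilityTheory.poissonPMFRealSum t.toNNReal
  refine this.congr_fun fun k => ?_
  simp [ProbabilityTheory.poissonPMFReal, poiF, Real.coe_toNNReal t ht]

lemma poiF_nonneg {k : ℕ} {t : ℝ} (ht : 0 ≤ t) : 0 ≤ poiF k t := by
  unfold poiF; positivity

lemma measure_toReal_eq (r : ℝ≥0) (s : Set ℕ) :
    ((ProbabilityTheory.poissonMeasure r) s).toReal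
      = ∑' k, Set.indicator s (fun k => poiF k (r : ℝ)) k := by
  rw [ProbabilityTheory.poissonMeasure, Measure.sum_apply _ (MeasurableSet.of_discrete),
    ENNReal.tsum_toReal_eq]
  · refine tsum_congr fun k => ?_
    rw [Measure.smul_apply, Measure.dirac_apply, smul_eq_mul]
    by_cases hk : k ∈ s
    · rw [Set.indicator_of_mem hk, Set.indicator_of_mem hk, Pi.one_apply, mul_one,
        ENNReal.toReal_ofReal (by positivity)]
      rfl
    · rw [Set.indicator_of_notMem hk, Set.indicator_of_notMem hk, mul_zero, ENNReal.toReal_zero]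
  · intro k
    rw [Measure.smul_apply, Measure.dirac_apply, smul_eq_mul]
    exact ENNReal.mul_ne_top ENNReal.ofReal_ne_top (by by_cases hk : k ∈ s <;> simp [hk])

/-- `d_TV(Poi(λ), Poi(λ')) ≤ |λ - λ'|`: for every event `s ⊆ ℕ`, the
probabilities assigned by the two Poisson distributions differ by at most `|λ - λ'|`. -/
theorem stmt11 (l l' : ℝ≥0) :
    ∀ s : Set ℕ,
      |((ProbabilityTheory.poissonMeasure l) s).toReal
        - ((ProbabilityTheory.poissonMeasure l') s).toReal| ≤ |(l : ℝ) - (l' : ℝ)| := by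
  intro s
  classical
  set M : ℝ := max (l : ℝ) (l' : ℝ) with hM
  have hM0 : 0 ≤ M := le_trans l.coe_nonneg (le_max_left _ _)
  set C : ℝ := M + 1 with hC
  have hC1 : 1 ≤ C := by simp [hC]; linarith
  have hC0 : 0 ≤ C := by linarith
  -- the family of functions and derivatives
  set f : ℕ → ℝ → ℝ := fun n t => if n ∈ s then poiF n t else 0 with hf_def
  set f' : ℕ → ℝ → ℝ := fun n t => if n ∈ s then poiD n t else 0 with hf'_def
  set T : Set ℝ := Set.Ioo (-1 : ℝ) (M + 1) with hT
  have hTopen : IsOpen T := isOpen_Ioo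
  have hTconn : IsPreconnected T := (convex_Ioo _ _).isPreconnected
  -- bound on poiF on T
  have hFbound : ∀ k : ℕ, ∀ t ∈ T, |poiF k t| ≤ Real.exp 1 * C ^ k / k.factorial := by
    intro k t ht
    obtain ⟨ht1, ht2⟩ := ht
    have h1 : Real.exp (-t) ≤ Real.exp 1 := Real.exp_le_exp.mpr (by linarith)
    have h2 : |t| ≤ C := by
      rw [abs_le]; constructor <;> [linarith; linarith [ht2]]
    have : |poiF k t| = Real.exp (-t) * |t| ^ k / k.factorial := by
      unfold poiF
      rw [abs_div, abs_mul, abs_pow, abs_of_pos (Real.exp_pos _),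
        abs_of_nonneg (by positivity : (0:ℝ) ≤ (k.factorial : ℝ))]
    rw [this]
    gcongr
  -- summable bound for derivatives
  set u : ℕ → ℝ := fun n =>
    Real.exp 1 * C ^ (n - 1) / (n - 1).factorial + Real.exp 1 * C ^ n / n.factorial with hu_def
  have hu : Summable u := by
    apply Summable.add
    · have hbase : Summable (fun n : ℕ => Real.exp 1 * C ^ n / n.factorial) := by
        refine ((Real.summable_pow_div_factorial C).mul_left (Real.exp 1)).congr fun n => ?_
        rw [mul_div_assoc]
      have := (_root_.summable_nat_add_iff
        (f := fun n : ℕ => Real.exp 1 * C ^ (n - 1) / (n - 1).factorial) 1).mp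
      apply this
      simpa using hbase
    · refine ((Real.summable_pow_div_factorial C).mul_left (Real.exp 1)).congr fun n => ?_
      rw [mul_div_assoc]
  have hu_nonneg : ∀ n, 0 ≤ u n := by
    intro n
    have : (0:ℝ) < Real.exp 1 := Real.exp_pos 1
    positivity
  -- derivative bound on T
  have hf'bound : ∀ n : ℕ, ∀ t ∈ T, ‖f' n t‖ ≤ u n := by
    intro n t ht
    by_cases hn : n ∈ s
    · simp only [hf'_def, hn, if_true, Real.norm_eq_abs]
      unfold poiD
      refine le_trans (abs_sub _ _) ?_
      have h2 : |poiF n t| ≤ Real.exp 1 * C ^ n / n.factorial := hFbound n t ht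
      have h1 : |if n = 0 then (0:ℝ) else poiF (n - 1) t|
          ≤ Real.exp 1 * C ^ (n - 1) / (n - 1).factorial := by
        split_ifs with h
        · simp; positivity
        · exact hFbound (n - 1) t ht
      simpa [hu_def] using add_le_add h1 h2
    · simp only [hf'_def, hn, if_false, norm_zero]
      exact hu_nonneg n
  -- each f n is differentiable on T
  have hfderiv : ∀ n : ℕ, ∀ t ∈ T, HasDerivAt (f n) (f' n t) t := by
    intro n t _
    by_cases hn : n ∈ s
    · simpa [hf_def, hf'_def, hn] using hasDerivAt_poiF n t
    · simpa [hf_def, hf'_def, hn] using hasDerivAt_const t (0 : ℝ)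
  -- summability of f at a point of T
  have hf0 : Summable fun n => f n 0 := by
    refine (summable_poiF 0).of_nonneg_of_le ?_ ?_
    · intro n; simp only [hf_def]; split_ifs
      · exact poiF_nonneg le_rfl
      · exact le_rfl
    · intro n; simp only [hf_def]; split_ifs
      · exact le_rfl
      · exact poiF_nonneg le_rfl
  have h0T : (0 : ℝ) ∈ T := by constructor <;> [norm_num; linarith]
  -- the total function g
  set g : ℝ → ℝ := fun t => ∑' n, f n t with hg_def
  have hgderiv : ∀ t ∈ T, HasDerivAt g (∑' n, f' n t) t := fun t ht =>
    hasDerivAt_tsum_of_isPreconnected hu hTopen hTconn hfderiv hf'bound h0T hf0 ht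
  -- bound the derivative by 1 on Icc 0 M
  have hderiv_le : ∀ t ∈ Set.Icc (0:ℝ) M, |∑' n, f' n t| ≤ 1 := by
    intro t ht
    have ht0 : 0 ≤ t := ht.1
    have hsum1 : HasSum (fun k => poiF k t) 1 := hasSum_poiF ht0
    -- the shifted part
    set h : ℕ → ℝ := fun n => if n ∈ s ∧ n ≠ 0 then poiF (n - 1) t else 0 with hh_def
    have hh_succ_le : ∀ n : ℕ, h (n + 1) ≤ poiF n t := by
      intro n
      simp only [hh_def]
      split_ifs with hn
      · simp
      · exact poiF_nonneg ht0
    have hh_succ_nonneg : ∀ n : ℕ, 0 ≤ h (n + 1) := by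
      intro n; simp only [hh_def]; split_ifs
      · exact poiF_nonneg ht0
      · exact le_rfl
    have hh_nonneg : ∀ n : ℕ, 0 ≤ h n := by
      intro n; simp only [hh_def]; split_ifs
      · exact poiF_nonneg ht0
      · exact le_rfl
    have hhsummable' : Summable (fun n => h (n + 1)) :=
      (summable_poiF t).of_nonneg_of_le hh_succ_nonneg hh_succ_le
    have hhsummable : Summable h := (_root_.summable_nat_add_iff 1).mp hhsummable'
    have hA_le : ∑' n, h n ≤ 1 := by
      have e0 : h 0 = 0 := by simp [hh_def]
      rw [Summable.tsum_eq_zero_add hhsummable, e0, zero_add]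
      calc ∑' n, h (n + 1) ≤ ∑' n, poiF n t :=
            Summable.tsum_le_tsum hh_succ_le hhsummable' (summable_poiF t)
        _ = 1 := hsum1.tsum_eq
    have hA_nonneg : 0 ≤ ∑' n, h n := tsum_nonneg hh_nonneg
    -- the B part
    have hBsummable : Summable (fun n => f n t) := by
      refine (summable_poiF t).of_nonneg_of_le ?_ ?_
      · intro n; simp only [hf_def]; split_ifs
        · exact poiF_nonneg ht0
        · exact le_rfl
      · intro n; simp only [hf_def]; split_ifs
        · exact le_rfl
        · exact poiF_nonneg ht0
    have hB_le : ∑' n, f n t ≤ 1 := by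
      calc ∑' n, f n t ≤ ∑' n, poiF n t := by
            refine Summable.tsum_le_tsum ?_ hBsummable (summable_poiF t)
            intro n; simp only [hf_def]; split_ifs
            · exact le_rfl
            · exact poiF_nonneg ht0
        _ = 1 := hsum1.tsum_eq
    have hB_nonneg : 0 ≤ ∑' n, f n t := by
      refine tsum_nonneg fun n => ?_
      simp only [hf_def]; split_ifs
      · exact poiF_nonneg ht0
      · exact le_rfl
    have hsplit : (fun n => f' n t) = fun n => h n - f n t := by
      funext n
      simp only [hf'_def, hf_def, hh_def, poiD]
      by_cases hn : n ∈ s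
      · simp only [hn, if_true, true_and]
        by_cases h0 : n = 0
        · simp [h0]
        · simp [h0]
      · simp [hn]
    rw [hsplit, Summable.tsum_sub hhsummable hBsummable]
    rw [abs_le]
    constructor <;> linarith
  -- conclude via MVT
  have key : ‖g (l : ℝ) - g (l' : ℝ)‖ ≤ 1 * ‖(l : ℝ) - (l' : ℝ)‖ := by
    refine Convex.norm_image_sub_le_of_norm_hasDerivWithin_le
      (f := g) (f' := fun t => ∑' n, f' n t) (s := Set.Icc (0:ℝ) M)
      ?_ ?_ (convex_Icc _ _) ?_ ?_
    · intro x hx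
      exact (hgderiv x ⟨by linarith [hx.1], by linarith [hx.2]⟩).hasDerivWithinAt
    · intro x hx
      simpa [Real.norm_eq_abs] using hderiv_le x hx
    · exact ⟨l'.coe_nonneg, le_max_right _ _⟩
    · exact ⟨l.coe_nonneg, le_max_left _ _⟩
  have hgl : ((ProbabilityTheory.poissonMeasure l) s).toReal = g (l : ℝ) := by
    rw [measure_toReal_eq]
    refine tsum_congr fun k => ?_
    simp [hg_def, hf_def, Set.indicator_apply]
  have hgl' : ((ProbabilityTheory.poissonMeasure l') s).toReal = g (l' : ℝ) := by
    rw [measure_toReal_eq]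
    refine tsum_congr fun k => ?_
    simp [hg_def, hf_def, Set.indicator_apply]
  rw [hgl, hgl']
  simpa [Real.norm_eq_abs] using key
end

section
/- The bipartite non-backtracking operator B satisfies the parity-time symmetry J_Δ B = B* J_Δ, where J_Δ = ΔJ = JΔ. -/
open Matrix

variable {V₁ V₂ : Type*}

/-- The set of oriented 2-paths `(e₁, e₂, e₃)` of a bipartite graph with edge relation `E`:
`{e₁, e₂}` and `{e₂, e₃}` are edges and `e₁ ≠ e₃`. -/
def Path2 (E : V₁ → V₂ → Prop) : Type _ :=
  {e : V₁ × V₂ × V₁ // E e.1 e.2.1 ∧ E e.2.2 e.2.1 ∧ e.1 ≠ e.2.2}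

variable [Fintype V₁] [Fintype V₂] [DecidableEq V₁] [DecidableEq V₂]
variable (E : V₁ → V₂ → Prop) [∀ x y, Decidable (E x y)]

instance : Fintype (Path2 E) := by unfold Path2; infer_instance
instance : DecidableEq (Path2 E) := by unfold Path2; infer_instance

/-- The start operator `S`, `S_{x,e} = 1{e₁ = x}`. -/
def startOp : Matrix V₁ (Path2 E) ℝ := fun x e => if e.val.1 = x then 1 else 0

/-- The terminal operator `T`, `T_{e,x} = 1{e₃ = x}`. -/
def termOp : Matrix (Path2 E) V₁ ℝ := fun e x => if e.val.2.2 = x then 1 else 0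

/-- The diagonal weight operator `Δ`, `Δ_{e,e} = A_{e₁e₂} A_{e₃e₂}`. -/
def weightOp (A : Matrix V₁ V₂ ℝ) : Matrix (Path2 E) (Path2 E) ℝ :=
  fun e f => if e = f then A e.val.1 e.val.2.1 * A e.val.2.2 e.val.2.1 else 0

/-- The edge-inversion operator `J`, `J_{e,f} = 1{f = (e₃, e₂, e₁)}`. -/
def invOp : Matrix (Path2 E) (Path2 E) ℝ :=
  fun e f => if f.val = (e.val.2.2, e.val.2.1, e.val.1) then 1 else 0

/-- The bipartite non-backtracking operator `B`,
`B_{ef} = 1{e₃ = f₁, e₂ ≠ f₂} A_{f₁f₂} A_{f₃f₂}`. -/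
def nbOp (A : Matrix V₁ V₂ ℝ) : Matrix (Path2 E) (Path2 E) ℝ :=
  fun e f => if e.val.2.2 = f.val.1 ∧ e.val.2.1 ≠ f.val.2.1
    then A f.val.1 f.val.2.1 * A f.val.2.2 f.val.2.1 else 0

/-- Inversion of a 2-path. -/
def Path2.inv {E : V₁ → V₂ → Prop} (e : Path2 E) : Path2 E :=
  ⟨(e.val.2.2, e.val.2.1, e.val.1), e.prop.2.1, e.prop.1, e.prop.2.2.symm⟩

lemma WJ_eq (A : Matrix V₁ V₂ ℝ) : weightOp E A * invOp E = fun e f =>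
    if f = Path2.inv e then A e.val.1 e.val.2.1 * A e.val.2.2 e.val.2.1 else 0 := by
  funext e f
  show ∑ j, weightOp E A e j * invOp E j f = _
  rw [Finset.sum_eq_single e]
  · have hiff : (f = Path2.inv e) ↔ (f.val = (e.val.2.2, e.val.2.1, e.val.1)) :=
      ⟨fun h => by rw [h]; rfl, fun h => Subtype.ext h⟩
    simp only [weightOp, invOp, if_pos rfl, mul_ite, mul_one, mul_zero]
    by_cases h : f = Path2.inv e
    · subst h; simp [Path2.inv]; exact (if_pos rfl).symm
    · rw [if_neg (fun hh => h (hiff.mpr hh)), if_neg h]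
  · intro b _ hb; simp [weightOp, Ne.symm hb]
  · simp

/-- parity-time symmetry `J_Δ B = B* J_Δ`, where `J_Δ = Δ J = J Δ`. -/
theorem stmt16 (A : Matrix V₁ V₂ ℝ) (hA : ∀ x y, ¬ E x y → A x y = 0) :
    (weightOp E A * invOp E) * nbOp E A = (nbOp E A)ᵀ * (weightOp E A * invOp E) := by
  rw [WJ_eq]
  ext e g
  change ∑ f, _ * _ = ∑ f, _ * _
  simp only [transpose_apply]
  have hinv : ∀ f : Path2 E, (g = Path2.inv f) ↔ (f = Path2.inv g) := by
    intro f
    constructor <;> (rintro rfl; apply Subtype.ext; rfl)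
  calc ∑ f, (if f = Path2.inv e then A e.val.1 e.val.2.1 * A e.val.2.2 e.val.2.1 else 0)
        * nbOp E A f g
      = (A e.val.1 e.val.2.1 * A e.val.2.2 e.val.2.1) * nbOp E A (Path2.inv e) g := by
        simp [ite_mul, Finset.sum_ite_eq']
    _ = nbOp E A (Path2.inv g) e * (A g.val.1 g.val.2.1 * A g.val.2.2 g.val.2.1) := by
        obtain ⟨⟨a,b,c⟩, he⟩ := e
        obtain ⟨⟨x,y,z⟩, hg⟩ := g
        simp only [nbOp, Path2.inv]
        show (A a b * A c b * if a = x ∧ b ≠ y then A x y * A z y else 0) = (if x = a ∧ y ≠ b then A a b * A c b else 0) * (A x y * A z y)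
        by_cases h : a = x ∧ b ≠ y
        · rw [if_pos ⟨h.1, h.2⟩, if_pos ⟨h.1.symm, Ne.symm h.2⟩]
        · rw [if_neg h, if_neg (fun hh => h ⟨hh.1.symm, Ne.symm hh.2⟩)]; ring
    _ = ∑ f, nbOp E A f e *
          (if g = Path2.inv f then A f.val.1 f.val.2.1 * A f.val.2.2 f.val.2.1 else 0) := by
        have hcong : ∀ f : Path2 E, nbOp E A f e *
            (if g = Path2.inv f then A f.val.1 f.val.2.1 * A f.val.2.2 f.val.2.1 else 0)
            = if f = Path2.inv g
              then nbOp E A f e * (A f.val.1 f.val.2.1 * A f.val.2.2 f.val.2.1) else 0 := by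
          intro f
          simp only [hinv f, mul_ite, mul_zero]
        simp only [hcong, Finset.sum_ite_eq', Finset.mem_univ, if_true]
        simp [Path2.inv, mul_comm]
end
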